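/- Let n ≥ 4 be an integer, let h be a nonzero rational number and C a rational number, and let a, b, c, d be rational numbers. Set P(X) = (h/n!) · (∏_{j=1}^{n−4} (X + j)) · (X⁴ + aX³ + bX² + cX + d). Assume: (i) P(X) = (−1)^n · P(−(n−3) − X) as an identity of polynomials; (ii) the coefficient of X^{n−2} in P equals ((n−3)²·h + C) / (12·(n−2)!); (iii) P(0) = 1. Then P(1) = h·(−n² + 7n − 8)/24 + C/12 + (n − 3). -/

import Mathlib

open Polynomial

private lemma R_eval_zero (m : ℕ) :
    (∏ j ∈ Finset.Icc 1 m, (X + C (j:ℚ))).eval 0 = (m.factorial : ℚ) := by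
  induction m with
  | zero => simp
  | succ m ih =>
    rw [Finset.prod_Icc_succ_top (by omega : 1 ≤ m+1)]
    simp only [eval_mul, ih, Nat.factorial_succ]
    push_cast; simp; ring

private lemma R_eval_one (m : ℕ) :
    (∏ j ∈ Finset.Icc 1 m, (X + C (j:ℚ))).eval 1 = ((m+1).factorial : ℚ) := by
  induction m with
  | zero => simp
  | succ m ih =>
    rw [Finset.prod_Icc_succ_top (by omega : 1 ≤ m+1)]
    simp only [eval_mul, ih, Nat.factorial_succ]
    push_cast; simp; ring

private lemma R_comp (m : ℕ) :
    (∏ j ∈ Finset.Icc 1 m, (X + C (j:ℚ))).comp (-(C ((m:ℚ)+1)) - X)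
      = (-1)^m * ∏ j ∈ Finset.Icc 1 m, (X + C (j:ℚ)) := by
  rw [prod_comp]
  have h1 : ∀ j ∈ Finset.Icc 1 m, (X + C (j:ℚ)).comp (-(C ((m:ℚ)+1)) - X)
      = (-1) * (X + C (((m+1-j : ℕ)):ℚ)) := by
    intro j hj
    simp only [Finset.mem_Icc] at hj
    have hc : ((m+1-j : ℕ) : ℚ) = (m:ℚ)+1-(j:ℚ) := by
      have h' : j ≤ m+1 := by omega
      push_cast [h']
      ring
    rw [hc]
    simp only [add_comp, X_comp, C_comp, C_add, C_sub, C_1]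
    ring
  rw [Finset.prod_congr rfl h1, Finset.prod_mul_distrib, Finset.prod_const,
    Nat.card_Icc]
  simp only [Nat.add_sub_cancel]
  congr 1
  apply Finset.prod_nbij' (fun j => m+1-j) (fun j => m+1-j)
  · intro j hj; simp only [Finset.mem_Icc] at *; omega
  · intro j hj; simp only [Finset.mem_Icc] at *; omega
  · intro j hj; simp only [Finset.mem_Icc] at hj; omega
  · intro j hj; simp only [Finset.mem_Icc] at hj; omega
  · intro j hj; rfl

private lemma T_coeff (a b c d : ℚ) (m : ℕ) :
    (((∏ j ∈ Finset.Icc 1 m, (X + C (j:ℚ))) *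
      (X ^ 4 + C a * X ^ 3 + C b * X ^ 2 + C c * X + C d)).natDegree ≤ m + 4)
    ∧ ((∏ j ∈ Finset.Icc 1 m, (X + C (j:ℚ))) *
      (X ^ 4 + C a * X ^ 3 + C b * X ^ 2 + C c * X + C d)).coeff (m+4) = 1
    ∧ ((∏ j ∈ Finset.Icc 1 m, (X + C (j:ℚ))) *
      (X ^ 4 + C a * X ^ 3 + C b * X ^ 2 + C c * X + C d)).coeff (m+3)
        = (m:ℚ)*((m:ℚ)+1)/2 + a
    ∧ ((∏ j ∈ Finset.Icc 1 m, (X + C (j:ℚ))) *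
      (X ^ 4 + C a * X ^ 3 + C b * X ^ 2 + C c * X + C d)).coeff (m+2)
        = (m:ℚ)*((m:ℚ)+1)*(3*(m:ℚ)+2)*((m:ℚ)-1)/24 + a*((m:ℚ)*((m:ℚ)+1)/2) + b := by
  induction m with
  | zero =>
    refine ⟨?_, ?_, ?_, ?_⟩ <;>
      simp [coeff_add, coeff_C_mul, coeff_X_pow, coeff_C, coeff_X]
    compute_degree
  | succ m ih =>
    obtain ⟨hdeg, h4, h3, h2⟩ := ih
    have hsplit : (∏ j ∈ Finset.Icc 1 (m+1), (X + C (j:ℚ))) *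
        (X ^ 4 + C a * X ^ 3 + C b * X ^ 2 + C c * X + C d)
        = ((∏ j ∈ Finset.Icc 1 m, (X + C (j:ℚ))) *
          (X ^ 4 + C a * X ^ 3 + C b * X ^ 2 + C c * X + C d)) * (X + C ((m:ℚ)+1)) := by
      rw [Finset.prod_Icc_succ_top (by omega : 1 ≤ m+1)]
      push_cast
      ring
    set T := (∏ j ∈ Finset.Icc 1 m, (X + C (j:ℚ))) *
          (X ^ 4 + C a * X ^ 3 + C b * X ^ 2 + C c * X + C d) with hT
    have hck : ∀ k : ℕ, (T * (X + C ((m:ℚ)+1))).coeff (k+1)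
        = T.coeff k + ((m:ℚ)+1) * T.coeff (k+1) := by
      intro k
      rw [mul_add, coeff_add, coeff_mul_X, coeff_mul_C]
      ring
    have h5 : T.coeff (m+5) = 0 :=
      coeff_eq_zero_of_natDegree_lt (by omega)
    refine ⟨?_, ?_, ?_, ?_⟩
    · rw [hsplit]
      refine le_trans (natDegree_mul_le) ?_
      have : (X + C ((m:ℚ)+1)).natDegree = 1 := natDegree_X_add_C _
      omega
    · rw [hsplit, show m+1+4 = (m+4)+1 from by omega, hck (m+4), h4,
        show m+4+1 = m+5 from by omega, h5]
      ring
    · rw [hsplit, show m+1+3 = (m+3)+1 from by omega, hck (m+3), h3,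
        show m+3+1 = m+4 from by omega, h4]
      push_cast
      ring
    · rw [hsplit, show m+1+2 = (m+2)+1 from by omega, hck (m+2), h2,
        show m+2+1 = m+3 from by omega, h3]
      push_cast
      ring

theorem chi_of_H_formula (n : ℕ) (hn : 4 ≤ n) (h : ℚ) (hh : h ≠ 0) (K : ℚ)
    (a b c d : ℚ) (P : ℚ[X])
    (hP : P = C (h / (n.factorial : ℚ)) *
      (∏ j ∈ Finset.Icc 1 (n - 4), (X + C (j : ℚ))) *
      (X ^ 4 + C a * X ^ 3 + C b * X ^ 2 + C c * X + C d))
    (hsym : P = (-1 : ℚ[X]) ^ n * P.comp (-(C ((n : ℚ) - 3)) - X))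
    (hcoeff : P.coeff (n - 2) =
      (((n : ℚ) - 3) ^ 2 * h + K) / (12 * ((n - 2).factorial : ℚ)))
    (heval : P.eval 0 = 1) :
    P.eval 1 = h * (-(n : ℚ) ^ 2 + 7 * (n : ℚ) - 8) / 24 + K / 12 + ((n : ℚ) - 3) := by
  obtain ⟨m, rfl⟩ : ∃ m, n = m + 4 := ⟨n - 4, by omega⟩
  rw [show m + 4 - 4 = m from by omega] at hP
  rw [show m + 4 - 2 = m + 2 from by omega] at hcoeff
  set s : ℚ := (m : ℚ) with hs
  have hs0 : (0:ℚ) ≤ s := Nat.cast_nonneg m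
  have hF : ((m.factorial : ℚ)) ≠ 0 := Nat.cast_ne_zero.mpr m.factorial_ne_zero
  have hfac4 : (((m+4).factorial : ℚ)) = (s+4)*(s+3)*(s+2)*(s+1)*(m.factorial:ℚ) := by
    rw [show m+4 = m+3+1 from rfl, Nat.factorial_succ,
      show m+3 = m+2+1 from rfl, Nat.factorial_succ,
      show m+2 = m+1+1 from rfl, Nat.factorial_succ, Nat.factorial_succ]
    push_cast; ring
  have hfac2 : (((m+2).factorial : ℚ)) = (s+2)*(s+1)*(m.factorial:ℚ) := by
    rw [show m+2 = m+1+1 from rfl, Nat.factorial_succ, Nat.factorial_succ]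
    push_cast; ring
  have hfac1 : (((m+1).factorial : ℚ)) = (s+1)*(m.factorial:ℚ) := by
    rw [Nat.factorial_succ]; push_cast; ring
  -- evaluation at 0
  rw [hP] at heval
  simp only [eval_mul, eval_C, R_eval_zero, eval_add, eval_pow, eval_X] at heval
  have hd' : h * d = (s+1)*(s+2)*(s+3)*(s+4) := by
    rw [hfac4] at heval
    field_simp at heval
    have h2 : (h * d) * (m.factorial:ℚ) = ((s+1)*(s+2)*(s+3)*(s+4)) * (m.factorial:ℚ) := by
      linear_combination (m.factorial:ℚ) * heval
    exact mul_right_cancel₀ hF h2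
  -- symmetry
  rw [hP] at hsym
  rw [show ((m+4:ℕ):ℚ) - 3 = (m:ℚ)+1 from by push_cast; ring] at hsym
  simp only [mul_comp, C_comp, R_comp] at hsym
  have hsgn : ((-1:ℚ[X])^(m+4)) * (-1)^m = 1 := by
    rw [← pow_add]
    exact Even.neg_one_pow ⟨m+2, by ring⟩
  have hCRne : C (h / (((m+4).factorial:ℚ))) * (∏ j ∈ Finset.Icc 1 m, (X + C (j:ℚ))) ≠ 0 := by
    refine mul_ne_zero ?_ (monic_prod_of_monic _ _ (fun j _ => monic_X_add_C _)).ne_zero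
    rw [Ne, C_eq_zero]
    exact div_ne_zero hh (by rw [hfac4]; positivity)
  have hkey : (C (h / (((m+4).factorial:ℚ))) * (∏ j ∈ Finset.Icc 1 m, (X + C (j:ℚ)))) *
      (X ^ 4 + C a * X ^ 3 + C b * X ^ 2 + C c * X + C d)
      = (C (h / (((m+4).factorial:ℚ))) * (∏ j ∈ Finset.Icc 1 m, (X + C (j:ℚ)))) *
      ((X ^ 4 + C a * X ^ 3 + C b * X ^ 2 + C c * X + C d).comp (-(C ((m:ℚ)+1)) - X)) := by
    rw [hsym]
    linear_combination (C (h / (((m+4).factorial:ℚ))) * (∏ j ∈ Finset.Icc 1 m, (X + C (j:ℚ))) *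
      ((X ^ 4 + C a * X ^ 3 + C b * X ^ 2 + C c * X + C d).comp (-(C ((m:ℚ)+1)) - X))) * hsgn
  have hQsym := mul_left_cancel₀ hCRne hkey
  have hE1 := congrArg (eval 1) hQsym
  have hE2 := congrArg (eval 2) hQsym
  simp only [eval_comp, eval_add, eval_mul, eval_pow, eval_sub, eval_neg, eval_C, eval_X,
    eval_one] at hE1 hE2
  have hs3 : s + 3 ≠ 0 := by positivity
  have hs5 : s + 5 ≠ 0 := by positivity
  have hs4 : s + 4 ≠ 0 := by positivity
  have hA1 : (a - 2*(s+1))*((s+1)^2+(s+1)+1) + (c - b*(s+1) + (s+1)^3) = 0 := by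
    have h1 : (s+3) * ((a - 2*(s+1))*((s+1)^2+(s+1)+1) + (c - b*(s+1) + (s+1)^3)) = 0 := by
      linear_combination hE1
    rcases mul_eq_zero.mp h1 with h' | h'
    · exact absurd h' hs3
    · exact h'
  have hA2 : (a - 2*(s+1))*((s+1)^2+2*(s+1)+4) + (c - b*(s+1) + (s+1)^3) = 0 := by
    have h1 : (s+5) * ((a - 2*(s+1))*((s+1)^2+2*(s+1)+4) + (c - b*(s+1) + (s+1)^3)) = 0 := by
      linear_combination hE2
    rcases mul_eq_zero.mp h1 with h' | h'
    · exact absurd h' hs5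
    · exact h'
  have ha : a = 2*(s+1) := by
    have h3 : (a - 2*(s+1))*(s+4) = 0 := by linear_combination hA2 - hA1
    rcases mul_eq_zero.mp h3 with h' | h'
    · linarith
    · exact absurd h' hs4
  have hc : c = b*(s+1) - (s+1)^3 := by
    linear_combination hA1 - (s^2+3*s+3) * ha
  -- coefficient hypothesis
  rw [hP, mul_assoc, coeff_C_mul, (T_coeff a b c d m).2.2.2,
    show ((m+4:ℕ):ℚ) - 3 = s+1 from by push_cast; ring, hfac4, hfac2] at hcoeff
  have hb' : 12 * h * (s*(s+1)*(3*s+2)*(s-1)/24 + a*(s*(s+1)/2) + b)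
      = (s+3)*(s+4)*((s+1)^2*h + K) := by
    have hne : ((s+1)*(s+2)*(m.factorial:ℚ)) ≠ 0 :=
      mul_ne_zero (by positivity) hF
    have h2 : (12 * h * (s*(s+1)*(3*s+2)*(s-1)/24 + a*(s*(s+1)/2) + b))
          * ((s+1)*(s+2)*(m.factorial:ℚ))
        = ((s+3)*(s+4)*((s+1)^2*h + K)) * ((s+1)*(s+2)*(m.factorial:ℚ)) := by
      rw [div_mul_eq_mul_div, div_eq_div_iff (by positivity) (by positivity)] at hcoeff
      linear_combination hcoeff
    exact mul_right_cancel₀ hne h2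
  -- final evaluation
  rw [hP]
  simp only [eval_mul, eval_C, R_eval_one, eval_add, eval_pow, eval_X]
  rw [hfac4, hfac1]
  have e1 : h / ((s+4)*(s+3)*(s+2)*(s+1)*(m.factorial:ℚ)) * ((s+1)*(m.factorial:ℚ))
      = h / ((s+4)*(s+3)*(s+2)) := by
    have : (0:ℚ) < (m.factorial:ℚ) := by positivity
    field_simp
  rw [e1]
  rw [div_mul_eq_mul_div, div_eq_iff (by positivity : ((s+4)*(s+3)*(s+2) : ℚ) ≠ 0)]
  push_cast
  linear_combination hd' + ((s+2)/12) * hb' + (h - h*s*(s+1)*(s+2)/2) * ha + h * hc
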